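/- Let T_− < T_+ be real numbers and let ρ(y) = 1/(π √((y−T_−)(T_+−y))) for y ∈ (T_−, T_+), a linear transformation of the arcsine (Beta(1/2,1/2)) density. Then ρ is the invariant density of the single-individual opinion model: for every bounded continuous f : [T_−, T_+] → ℝ, ∫_{T_−}^{T_+} ρ(y) ( ∫₀¹ [ f(u T_− + (1−u) y) + f(u y + (1−u) T_+) − 2 f(y) ] du ) dy = 0. -/

import Mathlib

open MeasureTheory Set

noncomputable def aisoRho (a b y : ℝ) : ℝ := 1 / (Real.pi * Real.sqrt ((y - a) * (b - y)))

lemma aisoRho_nonneg (a b y : ℝ) : 0 ≤ aisoRho a b y := by unfold aisoRho; positivity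

lemma aisoRho_measurable (a b : ℝ) : Measurable (aisoRho a b) := by
  unfold aisoRho; fun_prop

lemma aisoRho_continuousOn {a b : ℝ} (hab : a < b) :
    ContinuousOn (aisoRho a b) (Set.Ioo a b) := by
  unfold aisoRho
  apply ContinuousOn.div continuousOn_const
  · fun_prop
  · intro y hy
    have : 0 < Real.sqrt ((y - a) * (b - y)) :=
      Real.sqrt_pos.2 (by nlinarith [hy.1, hy.2])
    positivity

lemma aisoArcsin_deriv {a b : ℝ} (hab : a < b) {y : ℝ} (hy : y ∈ Set.Ioo a b) :
    HasDerivAt (fun z => (1/Real.pi) * Real.arcsin ((2*z - a - b)/(b-a))) (aisoRho a b y) y := by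
  have hba : (0:ℝ) < b - a := sub_pos.2 hab
  have h1 : HasDerivAt (fun z : ℝ => (2*z - a - b)/(b-a)) (2/(b-a)) y := by
    have h : HasDerivAt (fun z : ℝ => 2*z - a - b) 2 y := by
      simpa using (((hasDerivAt_id y).const_mul 2).sub_const a).sub_const b
    simpa using h.div_const (b-a)
  set t := (2*y - a - b)/(b-a) with ht
  have htgt : -1 < t := by rw [ht, lt_div_iff₀ hba]; linarith [hy.1]
  have htlt : t < 1 := by rw [ht, div_lt_iff₀ hba]; linarith [hy.2]
  have harc := Real.hasDerivAt_arcsin (ne_of_gt htgt) (ne_of_lt htlt)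
  have hcomp := (harc.comp y h1).const_mul (1/Real.pi)
  refine hcomp.congr_deriv ?_
  have hsq : 1 - t^2 = (2/(b-a))^2 * ((y-a)*(b-y)) := by
    rw [ht]; field_simp; ring
  have hS : 0 < Real.sqrt ((y-a)*(b-y)) := Real.sqrt_pos.2 (by nlinarith [hy.1, hy.2])
  rw [hsq, Real.sqrt_mul (sq_nonneg _),
    Real.sqrt_sq (by positivity : (0:ℝ) ≤ 2/(b-a))]
  unfold aisoRho
  field_simp

lemma aisoRho_integrableOn {a b : ℝ} (hab : a < b) :
    IntegrableOn (aisoRho a b) (Set.Ioo a b) := by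
  have h := intervalIntegral.integrableOn_deriv_of_nonneg (g := fun z => (1/Real.pi) * Real.arcsin ((2*z - a - b)/(b-a)))
    (g' := aisoRho a b) (a := a) (b := b)
    ((continuous_const.mul (Real.continuous_arcsin.comp (by fun_prop))).continuousOn)
    (fun y hy => aisoArcsin_deriv hab hy)
    (fun y _ => aisoRho_nonneg a b y)
  exact h.mono_set Set.Ioo_subset_Ioc_self

-- weight 1: ∫_{Ioo x b} ρ(y)/(y-a) dy
lemma aiso_w1 {a b x : ℝ} (hab : a < b) (hx : x ∈ Set.Ioo a b) :
    ∫ y in Set.Ioo x b, aisoRho a b y * (y - a)⁻¹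
      = 2/(Real.pi*(b-a)) * (Real.sqrt (b-x) / Real.sqrt (x-a)) := by
  set F : ℝ → ℝ := fun y => -(2/(Real.pi*(b-a))) * (Real.sqrt (b-y) / Real.sqrt (y-a)) with hF
  have hxa : 0 < x - a := sub_pos.2 hx.1
  have hcont : ContinuousOn F (Set.Icc x b) := by
    apply ContinuousOn.mul continuousOn_const
    apply ContinuousOn.div
    · fun_prop
    · fun_prop
    · intro y hy
      have : 0 < Real.sqrt (y - a) := Real.sqrt_pos.2 (by linarith [hy.1])
      exact this.ne'
  have hderiv : ∀ y ∈ Set.Ioo x b, HasDerivAt F (aisoRho a b y * (y - a)⁻¹) y := by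
    intro y hy
    have hya : 0 < y - a := by linarith [hy.1, hx.1]
    have hby : 0 < b - y := by linarith [hy.2]
    have hs : 0 < Real.sqrt (y - a) := Real.sqrt_pos.2 hya
    have ht : 0 < Real.sqrt (b - y) := Real.sqrt_pos.2 hby
    have hnum : HasDerivAt (fun y => Real.sqrt (b - y)) (1/(2*Real.sqrt (b-y)) * (-1)) y := by
      exact (Real.hasDerivAt_sqrt hby.ne').comp y (by simpa using (hasDerivAt_id y).const_sub b)
    have hden : HasDerivAt (fun y => Real.sqrt (y - a)) (1/(2*Real.sqrt (y-a)) * 1) y := by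
      exact (Real.hasDerivAt_sqrt hya.ne').comp y (by simpa using (hasDerivAt_id y).sub_const a)
    have hdiv := (hnum.div hden hs.ne').const_mul (-(2/(Real.pi*(b-a))))
    refine hdiv.congr_deriv ?_
    have hsq : Real.sqrt (y-a) * Real.sqrt (y-a) = y - a := Real.mul_self_sqrt hya.le
    have htq : Real.sqrt (b-y) * Real.sqrt (b-y) = b - y := Real.mul_self_sqrt hby.le
    have hprod : Real.sqrt ((y-a)*(b-y)) = Real.sqrt (y-a) * Real.sqrt (b-y) :=
      Real.sqrt_mul hya.le _
    have hbay : b - a = Real.sqrt (y-a) * Real.sqrt (y-a) + Real.sqrt (b-y) * Real.sqrt (b-y) := by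
      rw [hsq, htq]; ring
    unfold aisoRho
    rw [hprod, hbay]
    set s := Real.sqrt (y-a) with hsdef
    set t := Real.sqrt (b-y) with htdef
    have h1 : s * s + t * t ≠ 0 := by positivity
    rw [← hsq]
    field_simp
    ring
  have hint : IntegrableOn (fun y => aisoRho a b y * (y - a)⁻¹) (Set.Ioc x b) :=
    intervalIntegral.integrableOn_deriv_of_nonneg hcont hderiv
      (fun y hy => by
        have hya : 0 < y - a := by linarith [hy.1, hx.1]
        have := aisoRho_nonneg a b y
        positivity)
  have hii : IntervalIntegrable (fun y => aisoRho a b y * (y - a)⁻¹) volume x b :=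
    (intervalIntegrable_iff_integrableOn_Ioc_of_le hx.2.le).2 hint
  have hftc := intervalIntegral.integral_eq_sub_of_hasDeriv_right_of_le hx.2.le hcont
    (fun y hy => (hderiv y hy).hasDerivWithinAt) hii
  rw [← MeasureTheory.integral_Ioc_eq_integral_Ioo, ← intervalIntegral.integral_of_le hx.2.le, hftc]
  rw [hF]
  simp only [sub_self, Real.sqrt_zero]
  ring

-- weight 2: ∫_{Ioo a x} ρ(y)/(b-y) dy
lemma aiso_w2 {a b x : ℝ} (hab : a < b) (hx : x ∈ Set.Ioo a b) :
    ∫ y in Set.Ioo a x, aisoRho a b y * (b - y)⁻¹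
      = 2/(Real.pi*(b-a)) * (Real.sqrt (x-a) / Real.sqrt (b-x)) := by
  set F : ℝ → ℝ := fun y => (2/(Real.pi*(b-a))) * (Real.sqrt (y-a) / Real.sqrt (b-y)) with hF
  have hbx : 0 < b - x := sub_pos.2 hx.2
  have hcont : ContinuousOn F (Set.Icc a x) := by
    apply ContinuousOn.mul continuousOn_const
    apply ContinuousOn.div
    · fun_prop
    · fun_prop
    · intro y hy
      have : 0 < Real.sqrt (b - y) := Real.sqrt_pos.2 (by linarith [hy.2])
      exact this.ne'
  have hderiv : ∀ y ∈ Set.Ioo a x, HasDerivAt F (aisoRho a b y * (b - y)⁻¹) y := by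
    intro y hy
    have hya : 0 < y - a := by linarith [hy.1]
    have hby : 0 < b - y := by linarith [hy.2, hx.2]
    have hs : 0 < Real.sqrt (y - a) := Real.sqrt_pos.2 hya
    have ht : 0 < Real.sqrt (b - y) := Real.sqrt_pos.2 hby
    have hnum : HasDerivAt (fun y => Real.sqrt (y - a)) (1/(2*Real.sqrt (y-a)) * 1) y := by
      exact (Real.hasDerivAt_sqrt hya.ne').comp y (by simpa using (hasDerivAt_id y).sub_const a)
    have hden : HasDerivAt (fun y => Real.sqrt (b - y)) (1/(2*Real.sqrt (b-y)) * (-1)) y := by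
      exact (Real.hasDerivAt_sqrt hby.ne').comp y (by simpa using (hasDerivAt_id y).const_sub b)
    have hdiv := (hnum.div hden ht.ne').const_mul (2/(Real.pi*(b-a)))
    refine hdiv.congr_deriv ?_
    have hsq : Real.sqrt (y-a) * Real.sqrt (y-a) = y - a := Real.mul_self_sqrt hya.le
    have htq : Real.sqrt (b-y) * Real.sqrt (b-y) = b - y := Real.mul_self_sqrt hby.le
    have hprod : Real.sqrt ((y-a)*(b-y)) = Real.sqrt (y-a) * Real.sqrt (b-y) :=
      Real.sqrt_mul hya.le _
    have hbay : b - a = Real.sqrt (y-a) * Real.sqrt (y-a) + Real.sqrt (b-y) * Real.sqrt (b-y) := by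
      rw [hsq, htq]; ring
    unfold aisoRho
    rw [hprod, hbay]
    set s := Real.sqrt (y-a) with hsdef
    set t := Real.sqrt (b-y) with htdef
    have h1 : s * s + t * t ≠ 0 := by positivity
    rw [← htq]
    field_simp
    ring
  have hint : IntegrableOn (fun y => aisoRho a b y * (b - y)⁻¹) (Set.Ioc a x) :=
    intervalIntegral.integrableOn_deriv_of_nonneg hcont hderiv
      (fun y hy => by
        have hby : 0 < b - y := by linarith [hy.2, hx.2]
        have := aisoRho_nonneg a b y
        positivity)
  have hii : IntervalIntegrable (fun y => aisoRho a b y * (b - y)⁻¹) volume a x :=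
    (intervalIntegrable_iff_integrableOn_Ioc_of_le hx.1.le).2 hint
  have hftc := intervalIntegral.integral_eq_sub_of_hasDeriv_right_of_le hx.1.le hcont
    (fun y hy => (hderiv y hy).hasDerivWithinAt) hii
  rw [← MeasureTheory.integral_Ioc_eq_integral_Ioo, ← intervalIntegral.integral_of_le hx.1.le, hftc]
  rw [hF]
  simp only [sub_self, Real.sqrt_zero]
  ring

-- the key pointwise identity : w1 + w2 = 2 ρ
lemma aiso_w_sum {a b x : ℝ} (hab : a < b) (hx : x ∈ Set.Ioo a b) :
    2/(Real.pi*(b-a)) * (Real.sqrt (b-x) / Real.sqrt (x-a))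
      + 2/(Real.pi*(b-a)) * (Real.sqrt (x-a) / Real.sqrt (b-x))
      = 2 * aisoRho a b x := by
  have hxa : 0 < x - a := sub_pos.2 hx.1
  have hbx : 0 < b - x := sub_pos.2 hx.2
  have hs : 0 < Real.sqrt (x - a) := Real.sqrt_pos.2 hxa
  have ht : 0 < Real.sqrt (b - x) := Real.sqrt_pos.2 hbx
  have hsq : Real.sqrt (x-a) * Real.sqrt (x-a) = x - a := Real.mul_self_sqrt hxa.le
  have htq : Real.sqrt (b-x) * Real.sqrt (b-x) = b - x := Real.mul_self_sqrt hbx.le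
  have hprod : Real.sqrt ((x-a)*(b-x)) = Real.sqrt (x-a) * Real.sqrt (b-x) :=
    Real.sqrt_mul hxa.le _
  have hbay : b - a = Real.sqrt (x-a) * Real.sqrt (x-a) + Real.sqrt (b-x) * Real.sqrt (b-x) := by
    rw [hsq, htq]; ring
  unfold aisoRho
  rw [hprod, hbay]
  set s := Real.sqrt (x-a)
  set t := Real.sqrt (b-x)
  have h1 : s * s + t * t ≠ 0 := by positivity
  field_simp
  ring

lemma aiso_fubini_lt {a b : ℝ} (hab : a < b) (g k : ℝ → ℝ)
    (hg : Measurable g) (hk : Measurable k)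
    (C : ℝ) (hC : ∀ x ∈ Set.Ioo a b, |g x| ≤ C)
    (hki : IntegrableOn (fun y => |k y| * (y - a)) (Set.Ioo a b)) :
    ∫ y in Set.Ioo a b, k y * (∫ x in Set.Ioo a y, g x)
      = ∫ x in Set.Ioo a b, g x * (∫ y in Set.Ioo x b, k y) := by
  set μ := volume.restrict (Set.Ioo a b) with hμ
  set Φ : ℝ × ℝ → ℝ :=
    Set.indicator {q : ℝ × ℝ | q.1 < q.2} (fun q => g q.1 * k q.2) with hΦ
  have hC0 : 0 ≤ C := le_trans (abs_nonneg _)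
    (hC ((a+b)/2) ⟨by linarith, by linarith⟩)
  have hΦm : Measurable Φ :=
    ((hg.comp measurable_fst).mul (hk.comp measurable_snd)).indicator
      (measurableSet_lt measurable_fst measurable_snd)
  -- slices
  have hslice₁ : ∀ y : ℝ, (fun x => Φ (x, y)) = Set.indicator (Set.Iio y) (fun x => g x * k y) := by
    intro y; funext x
    by_cases h : x < y
    · simp [hΦ, Set.indicator_of_mem, h, Set.mem_Iio, Set.mem_setOf_eq]
    · simp [hΦ, Set.indicator_of_notMem, h, Set.mem_Iio, Set.mem_setOf_eq]
  have hslice₂ : ∀ x : ℝ, (fun y => Φ (x, y)) = Set.indicator (Set.Ioi x) (fun y => g x * k y) := by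
    intro x; funext y
    by_cases h : x < y
    · simp [hΦ, Set.indicator_of_mem, h, Set.mem_Ioi, Set.mem_setOf_eq]
    · simp [hΦ, Set.indicator_of_notMem, h, Set.mem_Ioi, Set.mem_setOf_eq]
  -- integrability on the product
  have hint : Integrable Φ (μ.prod μ) := by
    refine (MeasureTheory.integrable_prod_iff' hΦm.aestronglyMeasurable).2 ⟨?_, ?_⟩
    · filter_upwards [ae_restrict_mem measurableSet_Ioo] with y hy
      refine Integrable.mono' (g := fun _ => C * |k y|)
        (integrableOn_const measure_Ioo_lt_top.ne enorm_ne_top) ?_ ?_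
      · exact ((hg.mul_const (k y)).indicator measurableSet_Iio).aestronglyMeasurable.congr
          (by rw [hslice₁ y])
      · filter_upwards [ae_restrict_mem measurableSet_Ioo] with x hx
        rw [congrFun (hslice₁ y) x, Real.norm_eq_abs]
        by_cases h : x ∈ Set.Iio y
        · rw [Set.indicator_of_mem h, abs_mul]
          exact mul_le_mul_of_nonneg_right (hC x hx) (abs_nonneg _)
        · rw [Set.indicator_of_notMem h]
          simp only [abs_zero]
          positivity
    · refine Integrable.mono' (g := fun y => C * (|k y| * (y - a))) (hki.const_mul C) ?_ ?_
      · exact ((hΦm.stronglyMeasurable.norm).integral_prod_left').aestronglyMeasurable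
      · filter_upwards [ae_restrict_mem measurableSet_Ioo] with y hy
        have h1 : ∀ x, ‖Φ (x, y)‖ ≤ Set.indicator (Set.Ioo a y) (fun _ => C * |k y|) x ∨ True := fun _ => Or.inr trivial
        have hnonneg : 0 ≤ ∫ x, ‖Φ (x, y)‖ ∂μ := integral_nonneg fun x => norm_nonneg _
        rw [Real.norm_eq_abs, abs_of_nonneg hnonneg]
        have hbound : ∀ᵐ x ∂μ, ‖Φ (x, y)‖ ≤ Set.indicator (Set.Ioo a y) (fun _ => C * |k y|) x := by
          filter_upwards [ae_restrict_mem measurableSet_Ioo] with x hx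
          rw [congrFun (hslice₁ y) x]
          by_cases h : x < y
          · rw [Set.indicator_of_mem (Set.mem_Iio.2 h),
              Set.indicator_of_mem (by exact ⟨hx.1, h⟩ : x ∈ Set.Ioo a y)]
            rw [Real.norm_eq_abs, abs_mul]
            exact mul_le_mul_of_nonneg_right (hC x hx) (abs_nonneg _)
          · rw [Set.indicator_of_notMem (by simpa using h),
              Set.indicator_of_notMem (fun hmem => h hmem.2)]
            simp
        have hindint : Integrable (Set.indicator (Set.Ioo a y) (fun _ => C * |k y|)) μ :=
          (integrableOn_const (C := C * |k y|) measure_Ioo_lt_top.ne enorm_ne_top).indicator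
            measurableSet_Ioo
        calc ∫ x, ‖Φ (x, y)‖ ∂μ
            ≤ ∫ x, Set.indicator (Set.Ioo a y) (fun _ => C * |k y|) x ∂μ := by
              refine integral_mono_of_nonneg (Filter.Eventually.of_forall fun x => norm_nonneg _) hindint hbound
          _ = C * (|k y| * (y - a)) := by
              rw [MeasureTheory.integral_indicator_const _ measurableSet_Ioo]
              rw [hμ, measureReal_restrict_apply measurableSet_Ioo]
              have : Set.Ioo a y ∩ Set.Ioo a b = Set.Ioo a y := by
                apply Set.inter_eq_self_of_subset_left
                exact Set.Ioo_subset_Ioo le_rfl hy.2.le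
              rw [this, measureReal_def, Real.volume_Ioo, smul_eq_mul,
                ENNReal.toReal_ofReal (by linarith [hy.1] : (0:ℝ) ≤ y - a)]
              ring
  -- swap
  have hswap := MeasureTheory.integral_integral_swap (f := fun x y => Φ (x, y))
    (μ := μ) (ν := μ) (by exact hint)
  calc ∫ y in Set.Ioo a b, k y * (∫ x in Set.Ioo a y, g x)
      = ∫ y, (∫ x, Φ (x, y) ∂μ) ∂μ := by
        refine (setIntegral_congr_fun measurableSet_Ioo fun y hy => ?_).symm
        rw [hslice₁ y, MeasureTheory.integral_indicator measurableSet_Iio]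
        rw [hμ, Measure.restrict_restrict measurableSet_Iio]
        have : Set.Iio y ∩ Set.Ioo a b = Set.Ioo a y := by
          ext z; simp only [Set.mem_inter_iff, Set.mem_Iio, Set.mem_Ioo]
          constructor
          · rintro ⟨h1, h2, h3⟩; exact ⟨h2, h1⟩
          · rintro ⟨h1, h2⟩; exact ⟨h2, h1, by linarith [hy.2]⟩
        rw [this, MeasureTheory.integral_mul_const]
        ring
    _ = ∫ x, (∫ y, Φ (x, y) ∂μ) ∂μ := hswap.symm
    _ = ∫ x in Set.Ioo a b, g x * (∫ y in Set.Ioo x b, k y) := by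
        refine setIntegral_congr_fun measurableSet_Ioo fun x hx => ?_
        rw [hslice₂ x, MeasureTheory.integral_indicator measurableSet_Ioi]
        rw [hμ, Measure.restrict_restrict measurableSet_Ioi]
        have : Set.Ioi x ∩ Set.Ioo a b = Set.Ioo x b := by
          ext z; simp only [Set.mem_inter_iff, Set.mem_Ioi, Set.mem_Ioo]
          constructor
          · rintro ⟨h1, h2, h3⟩; exact ⟨h1, h3⟩
          · rintro ⟨h1, h2⟩; exact ⟨h1, by linarith [hx.1], h2⟩
        rw [this, MeasureTheory.integral_const_mul]

lemma aiso_fubini_gt {a b : ℝ} (hab : a < b) (g k : ℝ → ℝ)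
    (hg : Measurable g) (hk : Measurable k)
    (C : ℝ) (hC : ∀ x ∈ Set.Ioo a b, |g x| ≤ C)
    (hki : IntegrableOn (fun y => |k y| * (b - y)) (Set.Ioo a b)) :
    ∫ y in Set.Ioo a b, k y * (∫ x in Set.Ioo y b, g x)
      = ∫ x in Set.Ioo a b, g x * (∫ y in Set.Ioo a x, k y) := by
  set μ := volume.restrict (Set.Ioo a b) with hμ
  set Φ : ℝ × ℝ → ℝ :=
    Set.indicator {q : ℝ × ℝ | q.2 < q.1} (fun q => g q.1 * k q.2) with hΦ
  have hC0 : 0 ≤ C := le_trans (abs_nonneg _)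
    (hC ((a+b)/2) ⟨by linarith, by linarith⟩)
  have hΦm : Measurable Φ :=
    ((hg.comp measurable_fst).mul (hk.comp measurable_snd)).indicator
      (measurableSet_lt measurable_snd measurable_fst)
  have hslice₁ : ∀ y : ℝ, (fun x => Φ (x, y)) = Set.indicator (Set.Ioi y) (fun x => g x * k y) := by
    intro y; funext x
    by_cases h : y < x
    · simp [hΦ, Set.indicator_of_mem, h, Set.mem_Ioi, Set.mem_setOf_eq]
    · simp [hΦ, Set.indicator_of_notMem, h, Set.mem_Ioi, Set.mem_setOf_eq]
  have hslice₂ : ∀ x : ℝ, (fun y => Φ (x, y)) = Set.indicator (Set.Iio x) (fun y => g x * k y) := by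
    intro x; funext y
    by_cases h : y < x
    · simp [hΦ, Set.indicator_of_mem, h, Set.mem_Iio, Set.mem_setOf_eq]
    · simp [hΦ, Set.indicator_of_notMem, h, Set.mem_Iio, Set.mem_setOf_eq]
  have hint : Integrable Φ (μ.prod μ) := by
    refine (MeasureTheory.integrable_prod_iff' hΦm.aestronglyMeasurable).2 ⟨?_, ?_⟩
    · filter_upwards [ae_restrict_mem measurableSet_Ioo] with y hy
      refine Integrable.mono' (g := fun _ => C * |k y|)
        (integrableOn_const measure_Ioo_lt_top.ne enorm_ne_top) ?_ ?_
      · exact ((hg.mul_const (k y)).indicator measurableSet_Ioi).aestronglyMeasurable.congr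
          (by rw [hslice₁ y])
      · filter_upwards [ae_restrict_mem measurableSet_Ioo] with x hx
        rw [congrFun (hslice₁ y) x, Real.norm_eq_abs]
        by_cases h : x ∈ Set.Ioi y
        · rw [Set.indicator_of_mem h, abs_mul]
          exact mul_le_mul_of_nonneg_right (hC x hx) (abs_nonneg _)
        · rw [Set.indicator_of_notMem h]
          simp only [abs_zero]
          positivity
    · refine Integrable.mono' (g := fun y => C * (|k y| * (b - y))) (hki.const_mul C) ?_ ?_
      · exact ((hΦm.stronglyMeasurable.norm).integral_prod_left').aestronglyMeasurable
      · filter_upwards [ae_restrict_mem measurableSet_Ioo] with y hy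
        have hnonneg : 0 ≤ ∫ x, ‖Φ (x, y)‖ ∂μ := integral_nonneg fun x => norm_nonneg _
        rw [Real.norm_eq_abs, abs_of_nonneg hnonneg]
        have hbound : ∀ᵐ x ∂μ, ‖Φ (x, y)‖ ≤ Set.indicator (Set.Ioo y b) (fun _ => C * |k y|) x := by
          filter_upwards [ae_restrict_mem measurableSet_Ioo] with x hx
          rw [congrFun (hslice₁ y) x]
          by_cases h : y < x
          · rw [Set.indicator_of_mem (Set.mem_Ioi.2 h),
              Set.indicator_of_mem (by exact ⟨h, hx.2⟩ : x ∈ Set.Ioo y b)]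
            rw [Real.norm_eq_abs, abs_mul]
            exact mul_le_mul_of_nonneg_right (hC x hx) (abs_nonneg _)
          · rw [Set.indicator_of_notMem (by simpa using h),
              Set.indicator_of_notMem (fun hmem => h hmem.1)]
            simp
        have hindint : Integrable (Set.indicator (Set.Ioo y b) (fun _ => C * |k y|)) μ :=
          (integrableOn_const (C := C * |k y|) measure_Ioo_lt_top.ne enorm_ne_top).indicator
            measurableSet_Ioo
        calc ∫ x, ‖Φ (x, y)‖ ∂μ
            ≤ ∫ x, Set.indicator (Set.Ioo y b) (fun _ => C * |k y|) x ∂μ := by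
              refine integral_mono_of_nonneg (Filter.Eventually.of_forall fun x => norm_nonneg _) hindint hbound
          _ = C * (|k y| * (b - y)) := by
              rw [MeasureTheory.integral_indicator_const _ measurableSet_Ioo]
              rw [hμ, measureReal_restrict_apply measurableSet_Ioo]
              have : Set.Ioo y b ∩ Set.Ioo a b = Set.Ioo y b := by
                apply Set.inter_eq_self_of_subset_left
                exact Set.Ioo_subset_Ioo hy.1.le le_rfl
              rw [this, measureReal_def, Real.volume_Ioo, smul_eq_mul,
                ENNReal.toReal_ofReal (by linarith [hy.2] : (0:ℝ) ≤ b - y)]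
              ring
  have hswap := MeasureTheory.integral_integral_swap (f := fun x y => Φ (x, y))
    (μ := μ) (ν := μ) (by exact hint)
  calc ∫ y in Set.Ioo a b, k y * (∫ x in Set.Ioo y b, g x)
      = ∫ y, (∫ x, Φ (x, y) ∂μ) ∂μ := by
        refine (setIntegral_congr_fun measurableSet_Ioo fun y hy => ?_).symm
        rw [hslice₁ y, MeasureTheory.integral_indicator measurableSet_Ioi]
        rw [hμ, Measure.restrict_restrict measurableSet_Ioi]
        have : Set.Ioi y ∩ Set.Ioo a b = Set.Ioo y b := by
          ext z; simp only [Set.mem_inter_iff, Set.mem_Ioi, Set.mem_Ioo]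
          constructor
          · rintro ⟨h1, h2, h3⟩; exact ⟨h1, h3⟩
          · rintro ⟨h1, h2⟩; exact ⟨h1, by linarith [hy.1], h2⟩
        rw [this, MeasureTheory.integral_mul_const]
        ring
    _ = ∫ x, (∫ y, Φ (x, y) ∂μ) ∂μ := hswap.symm
    _ = ∫ x in Set.Ioo a b, g x * (∫ y in Set.Ioo a x, k y) := by
        refine setIntegral_congr_fun measurableSet_Ioo fun x hx => ?_
        rw [hslice₂ x, MeasureTheory.integral_indicator measurableSet_Iio]
        rw [hμ, Measure.restrict_restrict measurableSet_Iio]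
        have : Set.Iio x ∩ Set.Ioo a b = Set.Ioo a x := by
          ext z; simp only [Set.mem_inter_iff, Set.mem_Iio, Set.mem_Ioo]
          constructor
          · rintro ⟨h1, h2, h3⟩; exact ⟨h2, h1⟩
          · rintro ⟨h1, h2⟩; exact ⟨h2, h1, by linarith [hx.2]⟩
        rw [this, MeasureTheory.integral_const_mul]

lemma aiso_inner {a b : ℝ} (hab : a < b) (g : ℝ → ℝ) (hg : Continuous g)
    {y : ℝ} (hy : y ∈ Set.Ioo a b) :
    ∫ u in (0:ℝ)..1, (g (u*a + (1-u)*y) + g (u*y + (1-u)*b) - 2 * g y)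
      = (y-a)⁻¹ * (∫ x in Set.Ioo a y, g x) + (b-y)⁻¹ * (∫ x in Set.Ioo y b, g x) - 2 * g y := by
  have hya : (0:ℝ) < y - a := sub_pos.2 hy.1
  have hby : (0:ℝ) < b - y := sub_pos.2 hy.2
  have hint1 : IntervalIntegrable (fun u => g (u*a + (1-u)*y)) volume 0 1 :=
    (hg.comp (by fun_prop)).intervalIntegrable 0 1
  have hint2 : IntervalIntegrable (fun u => g (u*y + (1-u)*b)) volume 0 1 :=
    (hg.comp (by fun_prop)).intervalIntegrable 0 1
  have h1 : ∫ u in (0:ℝ)..1, g (u*a + (1-u)*y) = (y-a)⁻¹ * (∫ x in Set.Ioo a y, g x) := by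
    have hc : a - y ≠ 0 := by linarith
    calc ∫ u in (0:ℝ)..1, g (u*a + (1-u)*y)
        = ∫ u in (0:ℝ)..1, g ((a-y)*u + y) := by
          apply intervalIntegral.integral_congr
          intro u _
          congr 1
          ring
      _ = (a-y)⁻¹ • ∫ x in ((a-y)*0 + y)..((a-y)*1 + y), g x :=
          intervalIntegral.integral_comp_mul_add g hc y
      _ = (y-a)⁻¹ * (∫ x in Set.Ioo a y, g x) := by
          have hb0 : (a-y)*0 + y = y := by ring
          have hb1 : (a-y)*1 + y = a := by ring
          rw [hb0, hb1, intervalIntegral.integral_symm,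
            intervalIntegral.integral_of_le hy.1.le,
            MeasureTheory.integral_Ioc_eq_integral_Ioo, smul_eq_mul,
            show a - y = -(y-a) by ring, inv_neg]
          ring
  have h2 : ∫ u in (0:ℝ)..1, g (u*y + (1-u)*b) = (b-y)⁻¹ * (∫ x in Set.Ioo y b, g x) := by
    have hc : y - b ≠ 0 := by linarith
    calc ∫ u in (0:ℝ)..1, g (u*y + (1-u)*b)
        = ∫ u in (0:ℝ)..1, g ((y-b)*u + b) := by
          apply intervalIntegral.integral_congr
          intro u _
          congr 1
          ring
      _ = (y-b)⁻¹ • ∫ x in ((y-b)*0 + b)..((y-b)*1 + b), g x :=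
          intervalIntegral.integral_comp_mul_add g hc b
      _ = (b-y)⁻¹ * (∫ x in Set.Ioo y b, g x) := by
          have hb0 : (y-b)*0 + b = b := by ring
          have hb1 : (y-b)*1 + b = y := by ring
          rw [hb0, hb1, intervalIntegral.integral_symm,
            intervalIntegral.integral_of_le hy.2.le,
            MeasureTheory.integral_Ioc_eq_integral_Ioo, smul_eq_mul,
            show y - b = -(b-y) by ring, inv_neg]
          ring
  rw [intervalIntegral.integral_sub (hint1.add hint2) (intervalIntegrable_const),
    intervalIntegral.integral_add hint1 hint2, h1, h2,
    intervalIntegral.integral_const]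
  simp

lemma aiso_main {a b : ℝ} (hab : a < b) (g : ℝ → ℝ) (hg : Continuous g)
    (C : ℝ) (hC : ∀ x, |g x| ≤ C) :
    ∫ y in Set.Ioo a b, aisoRho a b y *
      ∫ u in (0:ℝ)..1, (g (u*a + (1-u)*y) + g (u*y + (1-u)*b) - 2 * g y) = 0 := by
  have hC0 : (0:ℝ) ≤ C := le_trans (abs_nonneg _) (hC 0)
  set P : ℝ → ℝ := fun y => ∫ x in Set.Ioo a y, g x with hP
  set Q : ℝ → ℝ := fun y => ∫ x in Set.Ioo y b, g x with hQ
  set k1 : ℝ → ℝ := fun y => aisoRho a b y * (y-a)⁻¹ with hk1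
  set k2 : ℝ → ℝ := fun y => aisoRho a b y * (b-y)⁻¹ with hk2
  -- continuity facts
  have hPc : ContinuousOn P (Set.Ioo a b) := by
    have hprim : Continuous fun y => ∫ t in a..y, g t :=
      intervalIntegral.continuous_primitive (fun c d => hg.intervalIntegrable c d) a
    refine hprim.continuousOn.congr fun y hy => ?_
    show (∫ x in Set.Ioo a y, g x) = ∫ t in a..y, g t
    rw [intervalIntegral.integral_of_le hy.1.le, MeasureTheory.integral_Ioc_eq_integral_Ioo]
  have hQc : ContinuousOn Q (Set.Ioo a b) := by
    have hprim : Continuous fun y => -(∫ t in b..y, g t) :=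
      (intervalIntegral.continuous_primitive (fun c d => hg.intervalIntegrable c d) b).neg
    refine hprim.continuousOn.congr fun y hy => ?_
    show (∫ x in Set.Ioo y b, g x) = -∫ t in b..y, g t
    rw [← MeasureTheory.integral_Ioc_eq_integral_Ioo, ← intervalIntegral.integral_of_le hy.2.le,
      intervalIntegral.integral_symm]
  have hk1c : ContinuousOn k1 (Set.Ioo a b) := by
    apply (aisoRho_continuousOn hab).mul
    apply ContinuousOn.inv₀ (by fun_prop)
    intro y hy
    have : (0:ℝ) < y - a := sub_pos.2 hy.1
    exact this.ne'
  have hk2c : ContinuousOn k2 (Set.Ioo a b) := by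
    apply (aisoRho_continuousOn hab).mul
    apply ContinuousOn.inv₀ (by fun_prop)
    intro y hy
    have : (0:ℝ) < b - y := sub_pos.2 hy.2
    exact this.ne'
  -- bounds on P and Q
  have hPb : ∀ y ∈ Set.Ioo a b, |P y| ≤ C * (y - a) := by
    intro y hy
    rw [hP, ← Real.norm_eq_abs]
    have := MeasureTheory.norm_setIntegral_le_of_norm_le_const (s := Set.Ioo a y) (C := C)
      (μ := volume) (f := g)
      (by rw [Real.volume_Ioo]; exact ENNReal.ofReal_lt_top)
      (fun x _ => hC x)
    · rw [measureReal_def, Real.volume_Ioo, ENNReal.toReal_ofReal (by linarith [hy.1] : (0:ℝ) ≤ y - a)] at this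
      linarith [this]
  have hQb : ∀ y ∈ Set.Ioo a b, |Q y| ≤ C * (b - y) := by
    intro y hy
    rw [hQ, ← Real.norm_eq_abs]
    have := MeasureTheory.norm_setIntegral_le_of_norm_le_const (s := Set.Ioo y b) (C := C)
      (μ := volume) (f := g)
      (by rw [Real.volume_Ioo]; exact ENNReal.ofReal_lt_top)
      (fun x _ => hC x)
    · rw [measureReal_def, Real.volume_Ioo, ENNReal.toReal_ofReal (by linarith [hy.2] : (0:ℝ) ≤ b - y)] at this
      linarith [this]
  -- integrability of the three pieces
  have hrhoC : IntegrableOn (fun y => C * aisoRho a b y) (Set.Ioo a b) :=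
    (aisoRho_integrableOn hab).const_mul C
  have hT1 : IntegrableOn (fun y => k1 y * P y) (Set.Ioo a b) := by
    refine Integrable.mono' hrhoC
      ((hk1c.mul hPc).aestronglyMeasurable measurableSet_Ioo) ?_
    filter_upwards [ae_restrict_mem measurableSet_Ioo] with y hy
    have hya : (0:ℝ) < y - a := sub_pos.2 hy.1
    have hrho := aisoRho_nonneg a b y
    rw [Real.norm_eq_abs, abs_mul, hk1, abs_of_nonneg (by positivity : (0:ℝ) ≤ aisoRho a b y * (y-a)⁻¹)]
    calc aisoRho a b y * (y-a)⁻¹ * |P y| ≤ aisoRho a b y * (y-a)⁻¹ * (C * (y-a)) := by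
          apply mul_le_mul_of_nonneg_left (hPb y hy) (by positivity)
      _ = C * aisoRho a b y := by field_simp
  have hT2 : IntegrableOn (fun y => k2 y * Q y) (Set.Ioo a b) := by
    refine Integrable.mono' hrhoC
      ((hk2c.mul hQc).aestronglyMeasurable measurableSet_Ioo) ?_
    filter_upwards [ae_restrict_mem measurableSet_Ioo] with y hy
    have hby : (0:ℝ) < b - y := sub_pos.2 hy.2
    have hrho := aisoRho_nonneg a b y
    rw [Real.norm_eq_abs, abs_mul, hk2, abs_of_nonneg (by positivity : (0:ℝ) ≤ aisoRho a b y * (b-y)⁻¹)]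
    calc aisoRho a b y * (b-y)⁻¹ * |Q y| ≤ aisoRho a b y * (b-y)⁻¹ * (C * (b-y)) := by
          apply mul_le_mul_of_nonneg_left (hQb y hy) (by positivity)
      _ = C * aisoRho a b y := by field_simp
  have hT3 : IntegrableOn (fun y => aisoRho a b y * (2 * g y)) (Set.Ioo a b) := by
    refine Integrable.mono' ((aisoRho_integrableOn hab).const_mul (2*C))
      (((aisoRho_continuousOn hab).mul (by fun_prop)).aestronglyMeasurable measurableSet_Ioo) ?_
    filter_upwards [ae_restrict_mem measurableSet_Ioo] with y hy
    have hrho := aisoRho_nonneg a b y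
    rw [Real.norm_eq_abs, abs_mul, abs_of_nonneg hrho, abs_mul, abs_two]
    calc aisoRho a b y * (2 * |g y|) ≤ aisoRho a b y * (2 * C) := by
          apply mul_le_mul_of_nonneg_left (by linarith [hC y]) hrho
      _ = 2 * C * aisoRho a b y := by ring
  -- rewrite the integrand and split
  have step1 : ∫ y in Set.Ioo a b, aisoRho a b y *
      ∫ u in (0:ℝ)..1, (g (u*a + (1-u)*y) + g (u*y + (1-u)*b) - 2 * g y)
      = ∫ y in Set.Ioo a b, (k1 y * P y + k2 y * Q y - aisoRho a b y * (2 * g y)) := by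
    refine setIntegral_congr_fun measurableSet_Ioo fun y hy => ?_
    rw [aiso_inner hab g hg hy, hk1, hk2, hP, hQ]
    ring
  have hT12 : IntegrableOn (fun y => k1 y * P y + k2 y * Q y) (Set.Ioo a b) := by
    exact hT1.add hT2
  rw [step1, MeasureTheory.integral_sub hT12 hT3, MeasureTheory.integral_add hT1 hT2]
  -- Fubini on the first two pieces
  have hk1m : Measurable k1 := (aisoRho_measurable a b).mul (by fun_prop)
  have hk2m : Measurable k2 := (aisoRho_measurable a b).mul (by fun_prop)
  have hki1 : IntegrableOn (fun y => |k1 y| * (y - a)) (Set.Ioo a b) := by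
    refine (aisoRho_integrableOn hab).congr_fun (fun y hy => ?_) measurableSet_Ioo
    have hya : (0:ℝ) < y - a := sub_pos.2 hy.1
    have hrho := aisoRho_nonneg a b y
    rw [hk1, abs_of_nonneg (by positivity)]
    field_simp
  have hki2 : IntegrableOn (fun y => |k2 y| * (b - y)) (Set.Ioo a b) := by
    refine (aisoRho_integrableOn hab).congr_fun (fun y hy => ?_) measurableSet_Ioo
    have hby : (0:ℝ) < b - y := sub_pos.2 hy.2
    have hrho := aisoRho_nonneg a b y
    rw [hk2, abs_of_nonneg (by positivity)]
    field_simp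
  have hf1 := aiso_fubini_lt hab g k1 hg.measurable hk1m C (fun x _ => hC x) hki1
  have hf2 := aiso_fubini_gt hab g k2 hg.measurable hk2m C (fun x _ => hC x) hki2
  -- identify the weights
  set w1 : ℝ → ℝ := fun x => 2/(Real.pi*(b-a)) * (Real.sqrt (b-x) / Real.sqrt (x-a)) with hw1
  set w2 : ℝ → ℝ := fun x => 2/(Real.pi*(b-a)) * (Real.sqrt (x-a) / Real.sqrt (b-x)) with hw2
  have hg1 : ∫ x in Set.Ioo a b, g x * (∫ y in Set.Ioo x b, k1 y)
      = ∫ x in Set.Ioo a b, g x * w1 x := by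
    refine setIntegral_congr_fun measurableSet_Ioo fun x hx => ?_
    rw [aiso_w1 hab hx]
  have hg2 : ∫ x in Set.Ioo a b, g x * (∫ y in Set.Ioo a x, k2 y)
      = ∫ x in Set.Ioo a b, g x * w2 x := by
    refine setIntegral_congr_fun measurableSet_Ioo fun x hx => ?_
    rw [aiso_w2 hab hx]
  -- nonnegativity and bound of weights
  have hwnn : ∀ i ∈ Set.Ioo a b, 0 ≤ w1 i ∧ 0 ≤ w2 i ∧ w1 i + w2 i = 2 * aisoRho a b i := by
    intro x hx
    have hba : (0:ℝ) < b - a := sub_pos.2 hab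
    have hpi := Real.pi_pos
    refine ⟨by rw [hw1]; positivity, by rw [hw2]; positivity, aiso_w_sum hab hx⟩
  have hw1c : ContinuousOn w1 (Set.Ioo a b) := by
    rw [hw1]
    apply ContinuousOn.mul continuousOn_const
    apply ContinuousOn.div (by fun_prop) (by fun_prop)
    intro x hx
    exact (Real.sqrt_pos.2 (sub_pos.2 hx.1)).ne'
  have hw2c : ContinuousOn w2 (Set.Ioo a b) := by
    rw [hw2]
    apply ContinuousOn.mul continuousOn_const
    apply ContinuousOn.div (by fun_prop) (by fun_prop)
    intro x hx
    exact (Real.sqrt_pos.2 (sub_pos.2 hx.2)).ne'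
  have hgw1 : IntegrableOn (fun x => g x * w1 x) (Set.Ioo a b) := by
    refine Integrable.mono' ((aisoRho_integrableOn hab).const_mul (2*C))
      (((hg.continuousOn).mul hw1c).aestronglyMeasurable measurableSet_Ioo) ?_
    filter_upwards [ae_restrict_mem measurableSet_Ioo] with x hx
    obtain ⟨h1, h2, h3⟩ := hwnn x hx
    rw [Real.norm_eq_abs, abs_mul, abs_of_nonneg h1]
    have hle : w1 x ≤ 2 * aisoRho a b x := by linarith
    calc |g x| * w1 x ≤ C * (2 * aisoRho a b x) :=
          mul_le_mul (hC x) hle h1 hC0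
      _ = 2 * C * aisoRho a b x := by ring
  have hgw2 : IntegrableOn (fun x => g x * w2 x) (Set.Ioo a b) := by
    refine Integrable.mono' ((aisoRho_integrableOn hab).const_mul (2*C))
      (((hg.continuousOn).mul hw2c).aestronglyMeasurable measurableSet_Ioo) ?_
    filter_upwards [ae_restrict_mem measurableSet_Ioo] with x hx
    obtain ⟨h1, h2, h3⟩ := hwnn x hx
    rw [Real.norm_eq_abs, abs_mul, abs_of_nonneg h2]
    have hle : w2 x ≤ 2 * aisoRho a b x := by linarith
    calc |g x| * w2 x ≤ C * (2 * aisoRho a b x) :=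
          mul_le_mul (hC x) hle h2 hC0
      _ = 2 * C * aisoRho a b x := by ring
  rw [hf1, hf2, hg1, hg2, ← MeasureTheory.integral_add hgw1 hgw2]
  have final : ∫ x in Set.Ioo a b, (g x * w1 x + g x * w2 x)
      = ∫ y in Set.Ioo a b, aisoRho a b y * (2 * g y) := by
    refine setIntegral_congr_fun measurableSet_Ioo fun x hx => ?_
    obtain ⟨h1, h2, h3⟩ := hwnn x hx
    calc g x * w1 x + g x * w2 x = g x * (w1 x + w2 x) := by ring
      _ = g x * (2 * aisoRho a b x) := by rw [h3]
      _ = aisoRho a b x * (2 * g x) := by ring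
  rw [final]
  ring

/-- the arcsine density `ρ(y) = 1/(π √((y−T₋)(T₊−y)))` is invariant for the
single-individual opinion model in contact with two external opinions `T₋ < T₊`. -/
theorem arcsine_invariant_single_individual
    (Tm Tp : ℝ) (hT : Tm < Tp) (f : ℝ → ℝ)
    (hf : ContinuousOn f (Set.Icc Tm Tp))
    (hfb : ∃ C, ∀ y ∈ Set.Icc Tm Tp, |f y| ≤ C) :
    ∫ y in Set.Ioo Tm Tp,
      (1 / (Real.pi * Real.sqrt ((y - Tm) * (Tp - y)))) *
        ∫ u in (0:ℝ)..1,
          (f (u * Tm + (1 - u) * y) + f (u * y + (1 - u) * Tp) - 2 * f y) = 0 := by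
  obtain ⟨C, hC⟩ := hfb
  set g : ℝ → ℝ := fun x => f (min Tp (max Tm x)) with hgdef
  have hmem : ∀ x, min Tp (max Tm x) ∈ Set.Icc Tm Tp := fun x =>
    ⟨le_min hT.le (le_max_left _ _), min_le_left _ _⟩
  have hg : Continuous g := hf.comp_continuous (by fun_prop) hmem
  have hgC : ∀ x, |g x| ≤ C := fun x => hC _ (hmem x)
  have hgeq : ∀ x ∈ Set.Icc Tm Tp, g x = f x := by
    intro x hx
    rw [hgdef]
    simp only
    rw [max_eq_right hx.1, min_eq_right hx.2]
  have key := aiso_main hT g hg C hgC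
  have heq : ∫ y in Set.Ioo Tm Tp,
      (1 / (Real.pi * Real.sqrt ((y - Tm) * (Tp - y)))) *
        ∫ u in (0:ℝ)..1,
          (f (u * Tm + (1 - u) * y) + f (u * y + (1 - u) * Tp) - 2 * f y)
      = ∫ y in Set.Ioo Tm Tp, aisoRho Tm Tp y *
        ∫ u in (0:ℝ)..1, (g (u * Tm + (1 - u) * y) + g (u * y + (1 - u) * Tp) - 2 * g y) := by
    refine setIntegral_congr_fun measurableSet_Ioo fun y hy => ?_
    have hyI : y ∈ Set.Icc Tm Tp := ⟨hy.1.le, hy.2.le⟩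
    have hinner : ∫ u in (0:ℝ)..1,
        (f (u * Tm + (1 - u) * y) + f (u * y + (1 - u) * Tp) - 2 * f y)
        = ∫ u in (0:ℝ)..1, (g (u * Tm + (1 - u) * y) + g (u * y + (1 - u) * Tp) - 2 * g y) := by
      apply intervalIntegral.integral_congr
      intro u hu
      rw [Set.uIcc_of_le (zero_le_one)] at hu
      show f (u * Tm + (1 - u) * y) + f (u * y + (1 - u) * Tp) - 2 * f y
        = g (u * Tm + (1 - u) * y) + g (u * y + (1 - u) * Tp) - 2 * g y
      have hu0 : (0:ℝ) ≤ u := hu.1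
      have hu1 : u ≤ 1 := hu.2
      have hm1 : u * Tm + (1 - u) * y ∈ Set.Icc Tm Tp := by
        constructor
        · nlinarith [hy.1, hy.2]
        · nlinarith [hy.1, hy.2, hT]
      have hm2 : u * y + (1 - u) * Tp ∈ Set.Icc Tm Tp := by
        constructor
        · nlinarith [hy.1, hy.2, hT]
        · nlinarith [hy.1, hy.2]
      rw [hgeq _ hm1, hgeq _ hm2, hgeq _ hyI]
    show (1 / (Real.pi * Real.sqrt ((y - Tm) * (Tp - y)))) *
        (∫ u in (0:ℝ)..1, (f (u * Tm + (1 - u) * y) + f (u * y + (1 - u) * Tp) - 2 * f y))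
      = aisoRho Tm Tp y *
        ∫ u in (0:ℝ)..1, (g (u * Tm + (1 - u) * y) + g (u * y + (1 - u) * Tp) - 2 * g y)
    rw [hinner]
    rfl
  rw [heq]
  exact key
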